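/- Let k = 𝔽_q be the finite field with q elements and let g ∈ GL₂(A) be the upper triangular matrix with diagonal entries a, d ∈ Aˣ and upper-right entry b ∈ A. If a = d and b ∈ εA ∖ {0}, then Fib(g) has exactly q elements. -/

import Mathlib

set_option maxRecDepth 8000


open Matrix
open scoped DualNumber

/-- A submodule `V` of `A²` (where `A = k[ε]` is the ring of dual numbers) is free of
rank 1 if it is generated by a vector `v ∉ ε·A²`. -/
def IsFreeRankOne {k : Type*} [Field k]
    (V : Submodule (DualNumber k) (Fin 2 → DualNumber k)) : Prop :=
  ∃ v : Fin 2 → DualNumber k,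
    (¬ ∃ u : Fin 2 → DualNumber k, v = (ε : DualNumber k) • u) ∧
    V = Submodule.span (DualNumber k) {v}

/-- `Fib g` is the set of free rank-1 `A`-submodules `V₂` of `A²` with `g·V₂ = V₂`. -/
def Fib {k : Type*} [Field k] (g : GL (Fin 2) (DualNumber k)) :
    Set (Submodule (DualNumber k) (Fin 2 → DualNumber k)) :=
  {V | IsFreeRankOne V ∧
    Submodule.map (Matrix.mulVecLin (g : Matrix (Fin 2) (Fin 2) (DualNumber k))) V = V}

section Aux

variable {k : Type*} [Field k]

private lemma aux_mulVec (a b d x y : DualNumber k) :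
    (!![a, b; 0, d]).mulVec ![x, y] = ![a*x + b*y, d*y] := by
  funext i; fin_cases i <;>
    simp [Matrix.mulVec, dotProduct, Fin.sum_univ_two]

private lemma aux_inr_eq (x : DualNumber k) (hx : x.fst = 0) :
    x = TrivSqZeroExt.inr x.snd := by
  apply TrivSqZeroExt.ext <;> simp [hx]

private lemma aux_inr_mul (s : k) (t : DualNumber k) :
    TrivSqZeroExt.inr (R := k) s * t = TrivSqZeroExt.inr (t.fst * s) := by
  apply TrivSqZeroExt.ext <;>
    simp [TrivSqZeroExt.fst_mul, TrivSqZeroExt.snd_mul, mul_comm]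

/-- the candidate lines -/
private def lineOf (s : k) : Submodule (DualNumber k) (Fin 2 → DualNumber k) :=
  Submodule.span (DualNumber k) {![1, TrivSqZeroExt.inr s]}

private lemma lineOf_injective : Function.Injective (lineOf (k := k)) := by
  intro s t h
  have hm : ![1, (TrivSqZeroExt.inr s : DualNumber k)] ∈ lineOf t := by
    rw [← h]; exact Submodule.mem_span_singleton_self _
  rw [lineOf, Submodule.mem_span_singleton] at hm
  obtain ⟨c, hc⟩ := hm
  have h0 := congr_fun hc 0
  have h1 := congr_fun hc 1
  simp [Pi.smul_apply, smul_eq_mul] at h0 h1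
  rw [h0, one_mul] at h1
  have h2 := congrArg TrivSqZeroExt.snd h1
  simpa using h2.symm

end Aux

/-- Case 4: over `k = 𝔽_q`, if `g` is upper triangular with unit diagonal
entries `a, d` and upper-right entry `b`, with `a = d` and `b ∈ εA ∖ {0}`, then `Fib g`
has exactly `q` elements. -/
theorem fib_card_case_four {k : Type*} [Field k] [Fintype k]
    (a d b : DualNumber k) (ha : IsUnit a) (hd : IsUnit d)
    (g : GL (Fin 2) (DualNumber k))
    (hg : (g : Matrix (Fin 2) (Fin 2) (DualNumber k)) = !![a, b; 0, d])
    (had : a = d)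
    (hb : ∃ z : DualNumber k, b = (ε : DualNumber k) * z)
    (hb' : b ≠ 0) :
    Nat.card (Fib g) = Fintype.card k := by
  subst had
  -- b has zero constant term
  have hbf : b.fst = 0 := by
    obtain ⟨z, hz⟩ := hb
    rw [hz, TrivSqZeroExt.fst_mul, DualNumber.fst_eps, zero_mul]
  have hbs : b.snd ≠ 0 := fun h => hb' (by
    apply TrivSqZeroExt.ext <;> simp [hbf, h])
  have hbinr : b = TrivSqZeroExt.inr b.snd := aux_inr_eq b hbf
  -- the action of g on a pair
  have hact : ∀ x y : DualNumber k,
      Matrix.mulVecLin (g : Matrix (Fin 2) (Fin 2) (DualNumber k)) ![x, y]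
        = ![a*x + b*y, a*y] := by
    intro x y
    rw [Matrix.mulVecLin_apply, hg, aux_mulVec]
  -- Fib g = range of lineOf
  have key : Fib g = Set.range (lineOf (k := k)) := by
    ext V
    constructor
    · rintro ⟨⟨v, hv, rfl⟩, hmap⟩
      rw [Submodule.map_span, Set.image_singleton] at hmap
      -- T v as a pair
      have hTv : Matrix.mulVecLin (g : Matrix (Fin 2) (Fin 2) (DualNumber k)) v
          = ![a * v 0 + b * v 1, a * v 1] := by
        have : v = ![v 0, v 1] := by
          funext i; fin_cases i <;> rfl
        rw [this, hact]
        simp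
      -- T v ∈ span {v}
      obtain ⟨c, hc⟩ := Submodule.mem_span_singleton.mp
        (hmap ▸ Submodule.mem_span_singleton_self
          (Matrix.mulVecLin (g : Matrix (Fin 2) (Fin 2) (DualNumber k)) v))
      -- v ∈ span {T v}
      obtain ⟨c', hc'⟩ := Submodule.mem_span_singleton.mp
        (hmap ▸ Submodule.mem_span_singleton_self v :
          v ∈ Submodule.span (DualNumber k)
            {Matrix.mulVecLin (g : Matrix (Fin 2) (Fin 2) (DualNumber k)) v})
      rw [hTv] at hc hc'
      have hc0 := congr_fun hc 0
      have hc1 := congr_fun hc 1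
      have hc'0 := congr_fun hc' 0
      have hc'1 := congr_fun hc' 1
      simp [Pi.smul_apply, smul_eq_mul] at hc0 hc1 hc'0 hc'1
      -- v 0 is a unit
      have hx : IsUnit (v 0) := by
        rw [TrivSqZeroExt.isUnit_iff_isUnit_fst, isUnit_iff_ne_zero]
        intro hxf
        -- then v 1 is a unit
        have hy : IsUnit (v 1) := by
          rw [TrivSqZeroExt.isUnit_iff_isUnit_fst, isUnit_iff_ne_zero]
          intro hyf
          apply hv
          refine ⟨![TrivSqZeroExt.inl ((v 0).snd), TrivSqZeroExt.inl ((v 1).snd)], ?_⟩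
          funext i
          have heq : ∀ w : DualNumber k, w.fst = 0 →
              w = ε * TrivSqZeroExt.inl w.snd := by
            intro w hw
            apply TrivSqZeroExt.ext <;>
              simp [TrivSqZeroExt.fst_mul, TrivSqZeroExt.snd_mul,
                DualNumber.fst_eps, DualNumber.snd_eps, hw]
          fin_cases i
          · exact heq _ hxf
          · exact heq _ hyf
        -- c' * a = 1
        have h1 : c' * a = 1 := by
          have : (c' * a) * v 1 = 1 * v 1 := by
            rw [one_mul]; linear_combination hc'1
          exact hy.mul_right_cancel this
        have hc'u : IsUnit c' := IsUnit.of_mul_eq_one _ h1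
        -- b = 0, contradiction
        have h2 : c' * (a * v 0 + b * v 1) = v 0 := hc'0
        have h3 : b * (c' * v 1) = 0 := by
          linear_combination h2 - v 0 * h1
        have hcu : IsUnit (c' * v 1) := hc'u.mul hy
        have : b = 0 := by
          have h4 : b * (c' * v 1) = 0 * (c' * v 1) := by rw [h3, zero_mul]
          exact hcu.mul_right_cancel h4
        exact hb' this
      -- b * (v 1)² = 0
      have hbyy : b * (v 1 * v 1) = 0 := by
        have e1 : (c * v 0) * v 1 = (a * v 0 + b * v 1) * v 1 := by rw [hc0]
        have e2 : (c * v 1) * v 0 = (a * v 1) * v 0 := by rw [hc1]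
        have : b * (v 1 * v 1) = (c * v 0) * v 1 - (c * v 1) * v 0 + ((a * v 1) * v 0 - (a * v 0) * v 1) := by
          rw [e1, e2]; ring
        rw [this]; ring
      -- hence (v 1).fst = 0
      have hyf : (v 1).fst = 0 := by
        rw [hbinr, aux_inr_mul] at hbyy
        have : (v 1 * v 1).fst * b.snd = 0 := by
          have := congrArg TrivSqZeroExt.snd hbyy
          simpa using this
        rw [TrivSqZeroExt.fst_mul] at this
        rcases mul_eq_zero.mp this with h | h
        · exact mul_self_eq_zero.mp h
        · exact absurd h hbs
      -- normalize the generator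
      set u := hx.unit with hu
      have hux : (↑u : DualNumber k) = v 0 := rfl
      set y' : DualNumber k := ↑u⁻¹ * v 1 with hy'
      have hy'f : y'.fst = 0 := by
        rw [hy', TrivSqZeroExt.fst_mul, hyf, mul_zero]
      refine ⟨y'.snd, ?_⟩
      have hw : (↑u⁻¹ : DualNumber k) • v = ![1, TrivSqZeroExt.inr y'.snd] := by
        funext i; fin_cases i
        · show (↑u⁻¹ : DualNumber k) * v 0 = 1
          rw [← hux, Units.inv_mul]
        · show (↑u⁻¹ : DualNumber k) * v 1 = TrivSqZeroExt.inr y'.snd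
          rw [← hy']
          exact aux_inr_eq y' hy'f
      rw [lineOf, ← hw]
      exact Submodule.span_singleton_smul_eq (u⁻¹).isUnit v
    · rintro ⟨s, rfl⟩
      constructor
      · refine ⟨![1, TrivSqZeroExt.inr s], ?_, rfl⟩
        rintro ⟨u, hu⟩
        have h0 : (1 : DualNumber k) = ε * u 0 := congr_fun hu 0
        have := congrArg TrivSqZeroExt.fst h0
        rw [TrivSqZeroExt.fst_one, TrivSqZeroExt.fst_mul,
          DualNumber.fst_eps, zero_mul] at this
        exact one_ne_zero this
      · rw [lineOf, Submodule.map_span, Set.image_singleton]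
        have : Matrix.mulVecLin (g : Matrix (Fin 2) (Fin 2) (DualNumber k))
            ![1, TrivSqZeroExt.inr s] = a • ![1, TrivSqZeroExt.inr s] := by
          rw [hact]
          funext i; fin_cases i
          · show a * 1 + b * TrivSqZeroExt.inr s = a * 1
            rw [hbinr, TrivSqZeroExt.inr_mul_inr, add_zero]
          · show a * TrivSqZeroExt.inr s = a * TrivSqZeroExt.inr s
            rfl
        rw [this]
        exact Submodule.span_singleton_smul_eq ha _
  rw [key, Nat.card_range_of_injective lineOf_injective, Nat.card_eq_fintype_card]
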